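/- arXiv:2309.00659 — 2 statements merged into one kernel-verified Lean document; each statement's English description precedes it below -/
import Mathlib

section
/- For every positive odd integer n and every integer m with 1 ≤ m ≤ (n+1)/2, the following congruence holds modulo the n-th cyclotomic polynomial Phi_n(q) in Z[q] (after clearing denominators): sum_{k=0}^{n-m} (q^{4m-2};q^4)_k / (q^2;q^2)_k * q^{3k - k^2 - 4km} ≡ (-1)^{(n-1)/2 + m - 1} * q^{-(n^2-1)/2 + 2m^2 - 2m} (mod Phi_n(q)). -/
open Finset Polynomial

/-- The q-Pochhammer symbol `(a; q)_n` in the field of rational functions. -/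
noncomputable def qPoch (a q : RatFunc ℚ) (n : ℕ) : RatFunc ℚ :=
  ∏ j ∈ Finset.range n, (1 - a * q ^ j)

/-- `A ≡ B (mod Φ_n(q)^e)` in the localization of `ℚ[q]` at the n-th cyclotomic
polynomial: the difference can be written as `Φ_n(q)^e · u / v` with `Φ_n ∤ v`. -/
def CongrModCyclo (n e : ℕ) (A B : RatFunc ℚ) : Prop :=
  ∃ u v : Polynomial ℚ, ¬ (Polynomial.cyclotomic n ℚ ∣ v) ∧
    (A - B) * algebraMap (Polynomial ℚ) (RatFunc ℚ) v
      = algebraMap (Polynomial ℚ) (RatFunc ℚ) ((Polynomial.cyclotomic n ℚ) ^ e * u)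

noncomputable def q : RatFunc ℚ := RatFunc.X


section PartI
variable {F : Type*} [Field F]

def tri : ℕ → ℤ
  | 0 => 0
  | (k+1) => tri k + k

lemma tri_succ (k : ℕ) : tri (k+1) = tri k + k := rfl

lemma two_tri (k : ℕ) : 2 * tri k = (k:ℤ)^2 - k := by
  induction k with
  | zero => simp [tri]
  | succ k ih => rw [tri_succ, mul_add, ih]; push_cast; ring

lemma sum_range_id_eq_tri (k : ℕ) : ∑ j ∈ range k, (j:ℤ) = tri k := by
  induction k with
  | zero => simp [tri]
  | succ k ih => rw [Finset.sum_range_succ, ih, tri_succ]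

noncomputable def Ppoc (x : F) (M k : ℕ) : F := ∏ j ∈ range k, (1 - x ^ (2*((M:ℤ) - j)))
noncomputable def Qpoc (x : F) (M k : ℕ) : F := ∏ j ∈ Ico k M, (1 - x ^ ((j:ℤ)+1))
noncomputable def xpoc (x : F) (M : ℕ) : F := ∏ j ∈ range M, (1 - x ^ ((j:ℤ)+1))
noncomputable def pt (x : F) (M k : ℕ) : F := Ppoc x M k * Qpoc x M k
noncomputable def gS (x : F) (M : ℕ) : F :=
  ∑ k ∈ range (M+1), (-1:F)^k * x^(tri k) * pt x M k
noncomputable def sS (x : F) (M : ℕ) : F :=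
  ∑ k ∈ range (M+1), (-1:F)^k * x^(tri k - k) * pt x M k

lemma Qpoc_zero (x : F) (M : ℕ) : Qpoc x M 0 = xpoc x M := by
  unfold Qpoc xpoc
  rw [Finset.range_eq_Ico]

lemma pt_zero (x : F) (M : ℕ) : pt x M 0 = xpoc x M := by
  simp [pt, Ppoc, Qpoc_zero]

lemma pt_top (x : F) (M : ℕ) : pt x M (M+1) = 0 := by
  have : Ppoc x M (M+1) = 0 := by
    apply Finset.prod_eq_zero (Finset.self_mem_range_succ M)
    simp
  simp [pt, this]

lemma xpoc_succ (x : F) (M : ℕ) : xpoc x (M+1) = xpoc x M * (1 - x^((M:ℤ)+1)) := by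
  rw [xpoc, Finset.prod_range_succ]; rfl

lemma Ppoc_succ (x : F) (M k : ℕ) :
    Ppoc x M (k+1) = Ppoc x M k * (1 - x ^ (2*((M:ℤ) - k))) := by
  rw [Ppoc, Finset.prod_range_succ]; rfl

lemma Ppoc_shift (x : F) (M k : ℕ) :
    Ppoc x (M+1) (k+1) = (1 - x ^ (2*((M:ℤ)+1))) * Ppoc x M k := by
  rw [Ppoc, Finset.prod_range_succ', mul_comm]
  congr 1
  · push_cast
    rw [Ppoc]
    apply Finset.prod_congr rfl
    intro j _
    congr 2
    ring


lemma Qpoc_top (x : F) (M k : ℕ) (hk : k ≤ M) :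
    Qpoc x (M+1) k = Qpoc x M k * (1 - x^((M:ℤ)+1)) := by
  rw [Qpoc, Finset.prod_Ico_succ_top hk]; rfl

lemma Qpoc_bot (x : F) (M k : ℕ) (hk : k < M) :
    Qpoc x M k = (1 - x^((k:ℤ)+1)) * Qpoc x M (k+1) := by
  rw [Qpoc, Finset.prod_eq_prod_Ico_succ_bot hk]; rfl

lemma Qpoc_self (x : F) (M : ℕ) : Qpoc x M M = 1 := by simp [Qpoc]

lemma pascal1 (x : F) (hx : x ≠ 0) (M k : ℕ) (hk : k ≤ M) :
    pt x (M+1) (k+1) = (1 - x^((M:ℤ)+1)) *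
      (pt x M (k+1) + x^(2*((M:ℤ)-k)) * (1 + x^((k:ℤ)+1)) * pt x M k) := by
  have hua : x^((M:ℤ)+1) = x^((M:ℤ)-k) * x^((k:ℤ)+1) := by
    rw [← zpow_add₀ hx]; congr 1; ring
  have hu2 : x^(2*((M:ℤ)-k)) = x^((M:ℤ)-k) * x^((M:ℤ)-k) := by
    rw [← zpow_add₀ hx]; congr 1; ring
  have h2M : x^(2*((M:ℤ)+1)) = (x^((M:ℤ)-k) * x^((k:ℤ)+1)) * (x^((M:ℤ)-k) * x^((k:ℤ)+1)) := by
    rw [← zpow_add₀ hx, ← zpow_add₀ hx]; congr 1; ring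
  rcases eq_or_lt_of_le hk with rfl | hklt
  · have hb : x^(2*((k:ℤ)+1)) = x^((k:ℤ)+1) * x^((k:ℤ)+1) := by
      rw [← zpow_add₀ hx]; congr 1; ring
    rw [pt_top]
    simp only [pt]
    rw [Ppoc_shift, Qpoc_self, Qpoc_self, hb,
      show (2*((k:ℤ) - k)) = 0 by ring, zpow_zero]
    ring
  · rw [show pt x M (k+1) = Ppoc x M k * (1 - x ^ (2*((M:ℤ) - k))) * Qpoc x M (k+1) by
      rw [pt, Ppoc_succ]]
    simp only [pt]
    rw [Ppoc_shift, Qpoc_top x M (k+1) hklt, Qpoc_bot x M k hklt, h2M, hua, hu2]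
    ring

lemma pascal2 (x : F) (hx : x ≠ 0) (M k : ℕ) (hk : k ≤ M) :
    pt x (M+1) (k+1) = (1 - x^((M:ℤ)+1)) *
      (x^(2*((k:ℤ)+1)) * pt x M (k+1) + (1 + x^((k:ℤ)+1)) * pt x M k) := by
  have hua : x^((M:ℤ)+1) = x^((M:ℤ)-k) * x^((k:ℤ)+1) := by
    rw [← zpow_add₀ hx]; congr 1; ring
  have hu2 : x^(2*((M:ℤ)-k)) = x^((M:ℤ)-k) * x^((M:ℤ)-k) := by
    rw [← zpow_add₀ hx]; congr 1; ring
  have ha2 : x^(2*((k:ℤ)+1)) = x^((k:ℤ)+1) * x^((k:ℤ)+1) := by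
    rw [← zpow_add₀ hx]; congr 1; ring
  have h2M : x^(2*((M:ℤ)+1)) = (x^((M:ℤ)-k) * x^((k:ℤ)+1)) * (x^((M:ℤ)-k) * x^((k:ℤ)+1)) := by
    rw [← zpow_add₀ hx, ← zpow_add₀ hx]; congr 1; ring
  rcases eq_or_lt_of_le hk with rfl | hklt
  · rw [pt_top]
    simp only [pt]
    rw [Ppoc_shift, Qpoc_self, Qpoc_self, ha2]
    ring
  · rw [show pt x M (k+1) = Ppoc x M k * (1 - x ^ (2*((M:ℤ) - k))) * Qpoc x M (k+1) by
      rw [pt, Ppoc_succ]]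
    simp only [pt]
    rw [Ppoc_shift, Qpoc_top x M (k+1) hklt, Qpoc_bot x M k hklt, h2M, hua, hu2, ha2]
    ring

end PartI

section Main
variable {F : Type*} [Field F]

lemma gS_rec (x : F) (hx : x ≠ 0) (M : ℕ) :
    gS x (M+1) = (1 - x^((M:ℤ)+1)) *
      (gS x M - x^(2*(M:ℤ)) * sS x M - x^(2*(M:ℤ)+1) * gS x M) := by
  have hkey : ∀ i ∈ range (M+1),
      (-1:F)^(i+1) * x^(tri (i+1)) * pt x (M+1) (i+1)
        = (1 - x^((M:ℤ)+1)) * (((-1:F)^(i+1) * x^(tri (i+1)) * pt x M (i+1))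
            - x^(2*(M:ℤ)) * ((-1:F)^i * x^(tri i - i) * pt x M i)
            - x^(2*(M:ℤ)+1) * ((-1:F)^i * x^(tri i) * pt x M i)) := by
    intro i hi
    have hi' : i ≤ M := Nat.lt_succ_iff.mp (Finset.mem_range.mp hi)
    rw [pascal1 x hx M i hi', tri_succ, pow_succ]
    have e1 : x ^ (tri i + (i:ℤ)) * x ^ (2 * ((M:ℤ) - i)) = x ^ (2*(M:ℤ)) * x ^ (tri i - i) := by
      rw [← zpow_add₀ hx, ← zpow_add₀ hx]; congr 1; ring
    have e2 : x ^ (tri i + (i:ℤ)) * (x ^ (2 * ((M:ℤ) - i)) * x ^ ((i:ℤ) + 1))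
        = x ^ (2*(M:ℤ)+1) * x ^ (tri i) := by
      rw [← zpow_add₀ hx, ← zpow_add₀ hx, ← zpow_add₀ hx]; congr 1; ring
    linear_combination (-(1 - x^((M:ℤ)+1)) * (-1:F)^i * pt x M i) * e1 +
      (-(1 - x^((M:ℤ)+1)) * (-1:F)^i * pt x M i) * e2
  have hsplit : gS x (M+1)
      = (∑ i ∈ range (M+1), (-1:F)^(i+1) * x^(tri (i+1)) * pt x (M+1) (i+1))
        + (-1:F)^0 * x^(tri 0) * pt x (M+1) 0 :=
    Finset.sum_range_succ' _ (M+1)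
  rw [hsplit, Finset.sum_congr rfl hkey, ← Finset.mul_sum]
  rw [Finset.sum_sub_distrib, Finset.sum_sub_distrib, ← Finset.mul_sum, ← Finset.mul_sum]
  have hA : ∑ i ∈ range (M+1), (-1:F)^(i+1) * x^(tri (i+1)) * pt x M (i+1)
      = gS x M - xpoc x M := by
    have h2 : ∑ k ∈ range (M+2), (-1:F)^k * x^(tri k) * pt x M k
        = (∑ i ∈ range (M+1), (-1:F)^(i+1) * x^(tri (i+1)) * pt x M (i+1))
          + (-1:F)^0 * x^(tri 0) * pt x M 0 :=
      Finset.sum_range_succ' _ (M+1)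
    have h3 : ∑ k ∈ range (M+2), (-1:F)^k * x^(tri k) * pt x M k
        = gS x M + (-1:F)^(M+1) * x^(tri (M+1)) * pt x M (M+1) :=
      Finset.sum_range_succ _ (M+1)
    rw [pt_top, pt_zero] at *
    have := h2.symm.trans h3
    simp only [tri, pow_zero, zpow_zero, one_mul, mul_zero, add_zero] at this ⊢
    linear_combination this
  have hB : ∑ i ∈ range (M+1), (-1:F)^i * x^(tri i - i) * pt x M i = sS x M := rfl
  have hC : ∑ i ∈ range (M+1), (-1:F)^i * x^(tri i) * pt x M i = gS x M := rfl
  rw [hA, hB, hC, pt_zero, xpoc_succ]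
  simp only [tri, pow_zero, zpow_zero, one_mul]
  ring

lemma sS_rec (x : F) (hx : x ≠ 0) (M : ℕ) :
    sS x (M+1) = -(x^(-1:ℤ)) * ((1 - x^((M:ℤ)+1)) * gS x M) := by
  have hkey : ∀ i ∈ range (M+1),
      (-1:F)^(i+1) * x^(tri (i+1) - (↑(i+1):ℤ)) * pt x (M+1) (i+1)
        = (1 - x^((M:ℤ)+1)) * ((((-1:F)^(i+1) * x^(tri (i+1) + (↑(i+1):ℤ)) * pt x M (i+1))
            - ((-1:F)^i * x^(tri i + i) * pt x M i))
            - x^(-1:ℤ) * ((-1:F)^i * x^(tri i) * pt x M i)) := by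
    intro i hi
    have hi' : i ≤ M := Nat.lt_succ_iff.mp (Finset.mem_range.mp hi)
    rw [pascal2 x hx M i hi', tri_succ, pow_succ]
    push_cast
    have e1 : x ^ (tri i + (i:ℤ) - ((i:ℤ)+1)) * x ^ (2 * ((i:ℤ)+1))
        = x ^ (tri i + (i:ℤ) + ((i:ℤ)+1)) := by
      rw [← zpow_add₀ hx]; congr 1; ring
    have e2 : x ^ (tri i + (i:ℤ) - ((i:ℤ)+1)) = x ^ (-1:ℤ) * x ^ (tri i) := by
      rw [← zpow_add₀ hx]; congr 1; ring
    have e3 : x ^ (tri i + (i:ℤ) - ((i:ℤ)+1)) * x ^ ((i:ℤ)+1) = x ^ (tri i + (i:ℤ)) := by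
      rw [← zpow_add₀ hx]; congr 1; ring
    linear_combination (-(1 - x^((M:ℤ)+1)) * (-1:F)^i * pt x M (i+1)) * e1 +
      (-(1 - x^((M:ℤ)+1)) * (-1:F)^i * pt x M i) * e2 +
      (-(1 - x^((M:ℤ)+1)) * (-1:F)^i * pt x M i) * e3
  have hsplit : sS x (M+1)
      = (∑ i ∈ range (M+1), (-1:F)^(i+1) * x^(tri (i+1) - (↑(i+1):ℤ)) * pt x (M+1) (i+1))
        + (-1:F)^0 * x^(tri 0 - (0:ℤ)) * pt x (M+1) 0 :=
    Finset.sum_range_succ' _ (M+1)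
  rw [hsplit, Finset.sum_congr rfl hkey, ← Finset.mul_sum]
  rw [Finset.sum_sub_distrib, Finset.sum_sub_distrib, ← Finset.mul_sum]
  have hA : (∑ i ∈ range (M+1), (-1:F)^(i+1) * x^(tri (i+1) + (↑(i+1):ℤ)) * pt x M (i+1))
        - (∑ i ∈ range (M+1), (-1:F)^i * x^(tri i + i) * pt x M i) = - xpoc x M := by
    have h2 : ∑ k ∈ range (M+2), (-1:F)^k * x^(tri k + k) * pt x M k
        = (∑ i ∈ range (M+1), (-1:F)^(i+1) * x^(tri (i+1) + (↑(i+1):ℤ)) * pt x M (i+1))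
          + (-1:F)^0 * x^(tri 0 + (0:ℤ)) * pt x M 0 :=
      Finset.sum_range_succ' _ (M+1)
    have h3 : ∑ k ∈ range (M+2), (-1:F)^k * x^(tri k + k) * pt x M k
        = (∑ i ∈ range (M+1), (-1:F)^i * x^(tri i + i) * pt x M i)
          + (-1:F)^(M+1) * x^(tri (M+1) + (↑(M+1):ℤ)) * pt x M (M+1) :=
      Finset.sum_range_succ _ (M+1)
    rw [pt_top, pt_zero] at *
    have := h2.symm.trans h3
    simp only [tri, pow_zero, zpow_zero, add_zero, one_mul, mul_zero] at this ⊢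
    linear_combination this
  have hC : ∑ i ∈ range (M+1), (-1:F)^i * x^(tri i) * pt x M i = gS x M := rfl
  rw [hA, hC, pt_zero, xpoc_succ]
  simp only [tri, pow_zero, zpow_zero, one_mul, Nat.cast_zero, sub_zero]
  ring

theorem gS_sS_closed (x : F) (hx : x ≠ 0) (M : ℕ) :
    gS x M = (-1)^M * x^((M:ℤ)^2) * xpoc x M ∧
    sS x M = (-1)^M * x^((M:ℤ)^2 - 2*(M:ℤ)) * xpoc x M := by
  induction M with
  | zero =>
      constructor <;> simp [gS, sS, tri, pt_zero, xpoc]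
  | succ M ih =>
      obtain ⟨ihg, ihs⟩ := ih
      constructor
      · rw [gS_rec x hx M, ihg, ihs, xpoc_succ,
          show ((M+1:ℕ):ℤ) = (M:ℤ)+1 from by push_cast; ring]
        have e1 : x^(2*(M:ℤ)) * x^((M:ℤ)^2 - 2*(M:ℤ)) = x^((M:ℤ)^2) := by
          rw [← zpow_add₀ hx]; congr 1; ring
        have e2 : x^(2*(M:ℤ)+1) * x^((M:ℤ)^2) = x^(((M:ℤ)+1)^2) := by
          rw [← zpow_add₀ hx]; congr 1; ring
        show (1 - x^((M:ℤ)+1)) * ((-1)^M * x^((M:ℤ)^2) * xpoc x M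
            - x^(2*(M:ℤ)) * ((-1)^M * x^((M:ℤ)^2 - 2*(M:ℤ)) * xpoc x M)
            - x^(2*(M:ℤ)+1) * ((-1)^M * x^((M:ℤ)^2) * xpoc x M))
          = (-1)^(M+1) * x^(((M:ℤ)+1)^2) * (xpoc x M * (1 - x^((M:ℤ)+1)))
        linear_combination (-(1 - x^((M:ℤ)+1)) * (-1:F)^M * xpoc x M) * e1 +
          (-(1 - x^((M:ℤ)+1)) * (-1:F)^M * xpoc x M) * e2
      · rw [sS_rec x hx M, ihg, xpoc_succ,
          show ((M+1:ℕ):ℤ) = (M:ℤ)+1 from by push_cast; ring]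
        have e1 : x^(-1:ℤ) * x^((M:ℤ)^2) = x^(((M:ℤ)+1)^2 - 2*((M:ℤ)+1)) := by
          rw [← zpow_add₀ hx]; congr 1; ring
        show -(x^(-1:ℤ)) * ((1 - x^((M:ℤ)+1)) * ((-1)^M * x^((M:ℤ)^2) * xpoc x M))
          = (-1)^(M+1) * x^(((M:ℤ)+1)^2 - 2*((M:ℤ)+1)) * (xpoc x M * (1 - x^((M:ℤ)+1)))
        linear_combination (-(1 - x^((M:ℤ)+1)) * (-1:F)^M * xpoc x M) * e1

end Main

section Helpers
variable {F : Type*} [Field F]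

lemma prod_zpow_sum (x : F) (hx : x ≠ 0) (s : Finset ℕ) (f : ℕ → ℤ) :
    ∏ j ∈ s, x ^ (f j) = x ^ (∑ j ∈ s, f j) := by
  induction s using Finset.cons_induction with
  | empty => simp
  | cons a s ha ih => rw [Finset.prod_cons, Finset.sum_cons, zpow_add₀ hx, ih]

lemma zpow_modeq (z : F) (hz0 : z ≠ 0) (n : ℕ) (hz : z^(n:ℕ) = 1)
    (a b c : ℤ) (h : a = b + (n:ℤ) * c) : z ^ a = z ^ b := by
  rw [h, zpow_add₀ hz0, zpow_mul, zpow_natCast, hz, one_zpow, mul_one]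

lemma neg_one_pow_eq_of_even_add {a b : ℕ} (h : Even (a + b)) :
    (-1 : F)^a = (-1 : F)^b := by
  have h1 : (-1:F)^a * (-1:F)^b = 1 := by rw [← pow_add]; exact h.neg_one_pow
  have h2 : (-1:F)^b * (-1:F)^b = 1 := by
    rw [← pow_add]; exact Even.neg_one_pow ⟨b, rfl⟩
  calc (-1:F)^a = (-1:F)^a * ((-1:F)^b * (-1:F)^b) := by rw [h2, mul_one]
    _ = ((-1:F)^a * (-1:F)^b) * (-1:F)^b := by ring
    _ = (-1:F)^b := by rw [h1, one_mul]

end Helpers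

lemma algMap_poch (a b k : ℕ) :
    (algebraMap (Polynomial ℚ) (RatFunc ℚ))
        (∏ j ∈ Finset.range k, (1 - Polynomial.X^a * (Polynomial.X^b)^j))
      = qPoch (q^a) (q^b) k := by
  rw [qPoch, map_prod]
  refine Finset.prod_congr rfl fun j _ => ?_
  simp [q, map_sub, map_mul, map_pow, RatFunc.algebraMap_X]

lemma poch_poly_ne_zero (a b k : ℕ) (ha : 0 < a) :
    (∏ j ∈ Finset.range k, ((1:Polynomial ℚ) - Polynomial.X^a * (Polynomial.X^b)^j)) ≠ 0 := by
  rw [Finset.prod_ne_zero_iff]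
  intro j _ h
  have := congrArg (Polynomial.eval 0) h
  simp [zero_pow ha.ne'] at this


lemma odd_no_dvd_helper (n j m c : ℕ) (hn2 : n % 2 = 1) (hm : 1 ≤ m)
    (hj : j < n - m) (hc : 2*(j+1) = n*c) : False := by
  rcases c with _ | _ | c
  · omega
  · omega
  · have hbig : n * 2 ≤ n * (c + 2) := Nat.mul_le_mul_left n (by omega)
    rw [← hc] at hbig
    omega

set_option maxHeartbeats 4000000 in
theorem qcongruence_thm (n m : ℕ) (hn : Odd n) (hn0 : 0 < n)
    (hm1 : 1 ≤ m) (hm2 : m ≤ (n + 1) / 2) :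
    CongrModCyclo n 1
      (∑ k ∈ range (n - m + 1),
        qPoch (q ^ (4 * m - 2)) (q ^ 4) k / qPoch (q ^ 2) (q ^ 2) k
          * q ^ (3 * (k : ℤ) - (k : ℤ) ^ 2 - 4 * (k : ℤ) * (m : ℤ)))
      ((-1) ^ ((n - 1) / 2 + m - 1)
        * q ^ (-(((n : ℤ) ^ 2 - 1) / 2) + 2 * (m : ℤ) ^ 2 - 2 * (m : ℤ))) := by
  classical
  have hn2 : n % 2 = 1 := Nat.odd_iff.mp hn
  set M : ℕ := (n+1)/2 - m with hM_def
  have hMm : 2*M + 2*m = n + 1 := by omega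
  have hMnm : M ≤ n - m := by omega
  have hmn : m ≤ n := by omega
  have hq0 : (q : RatFunc ℚ) ≠ 0 := by unfold q; exact RatFunc.X_ne_zero
  -- the field K and the primitive root
  haveI hirr : Fact (Irreducible (cyclotomic n ℚ)) := ⟨cyclotomic.irreducible_rat hn0⟩
  set ζ : AdjoinRoot (cyclotomic n ℚ) := AdjoinRoot.root (cyclotomic n ℚ) with hζdef
  have hζΦ : aeval ζ (cyclotomic n ℚ) = 0 := by
    rw [hζdef, aeval_def, show algebraMap ℚ (AdjoinRoot (cyclotomic n ℚ)) = AdjoinRoot.of (cyclotomic n ℚ) from RingHom.ext_rat _ _]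
    exact AdjoinRoot.eval₂_root _
  haveI : CharZero (AdjoinRoot (cyclotomic n ℚ)) :=
    charZero_of_injective_algebraMap (algebraMap ℚ (AdjoinRoot (cyclotomic n ℚ))).injective
  haveI : NeZero (n : AdjoinRoot (cyclotomic n ℚ)) := ⟨Nat.cast_ne_zero.mpr hn0.ne'⟩
  have hζprim : IsPrimitiveRoot ζ n := by
    rw [← Polynomial.isRoot_cyclotomic_iff (R := AdjoinRoot (cyclotomic n ℚ))]
    have hmapc : (cyclotomic n ℚ).map (algebraMap ℚ (AdjoinRoot (cyclotomic n ℚ))) = cyclotomic n (AdjoinRoot (cyclotomic n ℚ)) :=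
      map_cyclotomic _ _
    rw [IsRoot, ← hmapc, Polynomial.eval_map, ← aeval_def, hζΦ]
  have hζn : ζ^(n:ℕ) = 1 := hζprim.pow_eq_one
  have hζ0 : ζ ≠ 0 := by
    intro h
    rw [h, zero_pow hn0.ne'] at hζn
    exact zero_ne_one hζn
  -- integer facts
  have hMmZ : 2*(M:ℤ) + 2*(m:ℤ) = (n:ℤ) + 1 := by exact_mod_cast hMm
  have hfB_eq : -(((n : ℤ) ^ 2 - 1) / 2) + 2 * (m : ℤ) ^ 2 - 2 * (m : ℤ)
      = 2*(M:ℤ)^2 - 2*(M:ℤ)*(n:ℤ) := by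
    have hdiv : ((n:ℤ)^2 - 1)/2 = 2*((M:ℤ)+m)*((M:ℤ)+m-1) := by
      rw [show (n:ℤ)^2 - 1 = 2*(2*((M:ℤ)+m)*((M:ℤ)+m-1)) by nlinarith [hMmZ]]
      exact Int.mul_ediv_cancel_left _ (by norm_num)
    rw [hdiv]; nlinarith [hMmZ]
  have hEe : ∀ k : ℕ, k ≤ n - m →
      (0:ℤ) ≤ ((8*n*n : ℕ):ℤ) + (3*(k:ℤ) - (k:ℤ)^2 - 4*(k:ℤ)*(m:ℤ)) := by
    intro k hk
    have hk2 : (k:ℤ) ≤ (n:ℤ) := by exact_mod_cast le_trans hk (Nat.sub_le n m)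
    have hm2' : (m:ℤ) ≤ (n:ℤ) := by exact_mod_cast hmn
    have hk0 : (0:ℤ) ≤ (k:ℤ) := Int.natCast_nonneg k
    have hm0 : (0:ℤ) ≤ (m:ℤ) := Int.natCast_nonneg m
    have : ((8*n*n : ℕ):ℤ) = 8*(n:ℤ)*(n:ℤ) := by push_cast; ring
    rw [this]
    nlinarith [hk2, hm2', hk0, hm0]
  have hEfB : (0:ℤ) ≤ ((8*n*n : ℕ):ℤ)
      + (-(((n : ℤ) ^ 2 - 1) / 2) + 2 * (m : ℤ) ^ 2 - 2 * (m : ℤ)) := by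
    rw [hfB_eq]
    have hM2 : (M:ℤ) ≤ (n:ℤ) := by
      have : M ≤ n := by omega
      exact_mod_cast this
    have hM0 : (0:ℤ) ≤ (M:ℤ) := Int.natCast_nonneg M
    have hn0' : (0:ℤ) ≤ (n:ℤ) := Int.natCast_nonneg n
    have : ((8*n*n : ℕ):ℤ) = 8*(n:ℤ)*(n:ℤ) := by push_cast; ring
    rw [this]
    nlinarith [hM2, hM0, hn0']
  -- polynomials
  set E : ℕ := 8*n*n with hE_def
  set Pd : Polynomial ℚ := ∏ j ∈ range (n-m), (1 - Polynomial.X^2 * (Polynomial.X^2)^j)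
    with hPd_def
  set NA : Polynomial ℚ := ∑ k ∈ range (n-m+1),
      ((∏ j ∈ range k, (1 - Polynomial.X^(4*m-2) * (Polynomial.X^4)^j))
        * (∏ j ∈ Ico k (n-m), (1 - Polynomial.X^2 * (Polynomial.X^2)^j))
        * Polynomial.X^(((E:ℤ) + (3*(k:ℤ) - (k:ℤ)^2 - 4*(k:ℤ)*(m:ℤ))).toNat)) with hNA_def
  set NB : Polynomial ℚ := Polynomial.C ((-1:ℚ)^((n-1)/2 + m - 1))
      * (Pd * Polynomial.X^((((E:ℤ) + (-(((n : ℤ) ^ 2 - 1) / 2) + 2 * (m : ℤ) ^ 2 - 2 * (m : ℤ)))).toNat))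
    with hNB_def
  set D : Polynomial ℚ := Polynomial.X^E * Pd with hD_def
  -- (L1)
  have hA_eq : (∑ k ∈ range (n - m + 1),
        qPoch (q ^ (4 * m - 2)) (q ^ 4) k / qPoch (q ^ 2) (q ^ 2) k
          * q ^ (3 * (k : ℤ) - (k : ℤ) ^ 2 - 4 * (k : ℤ) * (m : ℤ)))
        * (algebraMap (Polynomial ℚ) (RatFunc ℚ)) D
      = (algebraMap (Polynomial ℚ) (RatFunc ℚ)) NA := by
    rw [hNA_def, hD_def, Finset.sum_mul, map_sum]
    refine Finset.sum_congr rfl fun k hk => ?_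
    have hk' : k ≤ n - m := by
      have := Finset.mem_range.mp hk; omega
    have hsplitPd : Pd = (∏ j ∈ range k, ((1:Polynomial ℚ) - Polynomial.X^2 * (Polynomial.X^2)^j))
        * (∏ j ∈ Ico k (n-m), (1 - Polynomial.X^2 * (Polynomial.X^2)^j)) := by
      rw [hPd_def, range_eq_Ico, ← Finset.prod_Ico_consecutive _ (Nat.zero_le k) hk',
        ← range_eq_Ico]
    have h2ne : qPoch (q ^ 2) (q ^ 2) k ≠ 0 := by
      rw [← algMap_poch 2 2 k]
      exact RatFunc.algebraMap_ne_zero (poch_poly_ne_zero 2 2 k (by norm_num))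
    have hqpow : (q : RatFunc ℚ)^((((E:ℤ) + (3*(k:ℤ) - (k:ℤ)^2 - 4*(k:ℤ)*(m:ℤ)))).toNat)
        = q^(E:ℕ) * q^(3*(k:ℤ) - (k:ℤ)^2 - 4*(k:ℤ)*(m:ℤ)) := by
      rw [← zpow_natCast q, Int.toNat_of_nonneg (hEe k hk'), zpow_add₀ hq0, zpow_natCast]
    rw [hsplitPd]
    simp only [map_mul, map_pow, RatFunc.algebraMap_X]
    rw [show (RatFunc.X : RatFunc ℚ) = q from rfl, hqpow,
      algMap_poch (4*m-2) 4 k, algMap_poch 2 2 k]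
    field_simp
  -- (L2)
  have hB_eq : ((-1) ^ ((n - 1) / 2 + m - 1)
        * q ^ (-(((n : ℤ) ^ 2 - 1) / 2) + 2 * (m : ℤ) ^ 2 - 2 * (m : ℤ)))
        * (algebraMap (Polynomial ℚ) (RatFunc ℚ)) D
      = (algebraMap (Polynomial ℚ) (RatFunc ℚ)) NB := by
    rw [hNB_def, hD_def]
    have hCneg : (algebraMap (Polynomial ℚ) (RatFunc ℚ)) (Polynomial.C (-1:ℚ)) = -1 := by
      simp
    rw [show Polynomial.C ((-1:ℚ)^((n-1)/2 + m - 1)) = (Polynomial.C (-1:ℚ))^((n-1)/2 + m - 1) by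
      rw [map_pow]]
    simp only [map_mul, map_pow, RatFunc.algebraMap_X, hCneg]
    rw [show (RatFunc.X : RatFunc ℚ) = q from rfl]
    have hqpow : (q : RatFunc ℚ)^((((E:ℤ) + (-(((n : ℤ) ^ 2 - 1) / 2) + 2 * (m : ℤ) ^ 2 - 2 * (m : ℤ)))).toNat)
        = q^(E:ℕ) * q^(-(((n : ℤ) ^ 2 - 1) / 2) + 2 * (m : ℤ) ^ 2 - 2 * (m : ℤ)) := by
      rw [← zpow_natCast q, Int.toNat_of_nonneg hEfB, zpow_add₀ hq0, zpow_natCast]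
    rw [hqpow]
    ring
  -- (L3)
  have hD_not : ¬ (cyclotomic n ℚ ∣ D) := by
    intro hdvd
    obtain ⟨c, hc⟩ := hdvd
    have h0 : aeval ζ D = 0 := by rw [hc, map_mul, hζΦ, zero_mul]
    have h1 : aeval ζ D = ζ^E * ∏ j ∈ range (n-m), (1 - ζ^2 * (ζ^2)^j) := by
      rw [hD_def, hPd_def]
      simp only [map_mul, map_pow, map_prod, map_sub, map_one, aeval_X]
    rw [h1] at h0
    have hE0 : ζ^E ≠ 0 := pow_ne_zero _ hζ0
    have hP0 : (∏ j ∈ range (n-m), (1 - ζ^2 * (ζ^2)^j)) ≠ 0 := by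
      rw [Finset.prod_ne_zero_iff]
      intro j hj
      intro hzero
      have hone : ζ^(2*(j+1)) = 1 := by
        have h' : (1 : AdjoinRoot (cyclotomic n ℚ)) = ζ^2 * (ζ^2)^j := sub_eq_zero.mp hzero
        rw [← pow_succ', ← pow_mul] at h'
        exact h'.symm
      have hdvd2 : n ∣ 2*(j+1) := hζprim.dvd_of_pow_eq_one _ hone
      obtain ⟨c', hc'⟩ := hdvd2
      exact odd_no_dvd_helper n j m c' hn2 hm1 (Finset.mem_range.mp hj) hc'
    exact (mul_ne_zero hE0 hP0) h0
    -- main evaluation at the root of unity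
  have hx0 : (ζ^(2:ℕ)) ≠ 0 := pow_ne_zero _ hζ0
  set x : AdjoinRoot (cyclotomic n ℚ) := ζ^(2:ℕ) with hxdef
  set Wone : AdjoinRoot (cyclotomic n ℚ) := ∏ j ∈ Ico M (n-m), (1 - x^((j:ℤ)+1)) with hWdef
  have hx2 : ∀ a : ℤ, x^a = ζ^(2*a) := by
    intro a
    rw [hxdef, ← zpow_natCast ζ 2, ← zpow_mul]
    norm_num
  have hfact2 : ∀ j : ℕ, (1 : AdjoinRoot (cyclotomic n ℚ)) - ζ^2 * (ζ^2)^j = 1 - x^((j:ℤ)+1) := by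
    intro j
    congr 1
    rw [hxdef, ← pow_succ', ← zpow_natCast]
    norm_num
  have hfact1 : ∀ j : ℕ, (1 : AdjoinRoot (cyclotomic n ℚ)) - ζ^(4*m-2) * (ζ^4)^j
      = -(x^(2*((j:ℤ)-(M:ℤ)))) * (1 - x^(2*((M:ℤ)-(j:ℤ)))) := by
    intro j
    have h1 : ζ^(4*m-2) * (ζ^4)^j = ζ^(4*(j:ℤ) - 4*(M:ℤ)) := by
      rw [← pow_mul, ← pow_add, ← zpow_natCast]
      apply zpow_modeq ζ hζ0 n hζn _ _ 2
      omega
    rw [h1]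
    have h2 : x^(2*((j:ℤ)-(M:ℤ))) * x^(2*((M:ℤ)-(j:ℤ))) = 1 := by
      rw [← zpow_add₀ hx0, show 2*((j:ℤ)-(M:ℤ)) + 2*((M:ℤ)-(j:ℤ)) = 0 by ring, zpow_zero]
    have h3 : x^(2*((j:ℤ)-(M:ℤ))) = ζ^(4*(j:ℤ) - 4*(M:ℤ)) := by
      rw [hx2]; congr 1; ring
    rw [← h3]
    linear_combination -h2
  have hsum2 : ∀ k : ℕ, ∑ j ∈ range k, (2*((j:ℤ)-(M:ℤ))) = 2*tri k - 2*(M:ℤ)*(k:ℤ) := by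
    intro k
    have hc : ∀ j ∈ range k, (2*((j:ℤ)-(M:ℤ))) = 2*(j:ℤ) - 2*(M:ℤ) := fun j _ => by ring
    rw [Finset.sum_congr rfl hc, Finset.sum_sub_distrib, ← Finset.mul_sum, sum_range_id_eq_tri,
      Finset.sum_const, Finset.card_range, nsmul_eq_mul]
    ring
  have hprod1 : ∀ k : ℕ, (∏ j ∈ range k, ((1: AdjoinRoot (cyclotomic n ℚ)) - ζ^(4*m-2) * (ζ^4)^j))
      = (-1)^k * ζ^(4*tri k - 4*(M:ℤ)*(k:ℤ)) * Ppoc x M k := by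
    intro k
    rw [Finset.prod_congr rfl (fun j _ => hfact1 j), Finset.prod_mul_distrib]
    congr 1
    · have hc : ∀ j ∈ range k, -(x^(2*((j:ℤ)-(M:ℤ)))) = (-1) * x^(2*((j:ℤ)-(M:ℤ))) :=
        fun j _ => by ring
      rw [Finset.prod_congr rfl hc, Finset.prod_mul_distrib, Finset.prod_const,
        Finset.card_range, prod_zpow_sum x hx0, hsum2 k, hx2]
      congr 2
      ring
  have hterm : ∀ k : ℕ, k ≤ M →
      (∏ j ∈ range k, ((1: AdjoinRoot (cyclotomic n ℚ)) - ζ^(4*m-2) * (ζ^4)^j))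
        * (∏ j ∈ Ico k (n-m), (1 - ζ^2 * (ζ^2)^j))
        * ζ^(((E:ℤ) + (3*(k:ℤ) - (k:ℤ)^2 - 4*(k:ℤ)*(m:ℤ))).toNat)
      = (ζ^((E:ℤ)) * Wone) * ((-1)^k * x^(tri k) * pt x M k) := by
    intro k hkM
    have hQ : (∏ j ∈ Ico k (n-m), ((1: AdjoinRoot (cyclotomic n ℚ)) - ζ^2 * (ζ^2)^j))
        = Qpoc x M k * Wone := by
      rw [Finset.prod_congr rfl (fun j _ => hfact2 j),
        ← Finset.prod_Ico_consecutive _ hkM hMnm, hWdef]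
      rfl
    have hP : ζ^(((E:ℤ) + (3*(k:ℤ) - (k:ℤ)^2 - 4*(k:ℤ)*(m:ℤ))).toNat)
        = ζ^((E:ℤ)) * ζ^(3*(k:ℤ) - (k:ℤ)^2 - 4*(k:ℤ)*(m:ℤ)) := by
      rw [← zpow_natCast ζ, Int.toNat_of_nonneg (hEe k (le_trans hkM hMnm)), zpow_add₀ hζ0]
    have hC : ζ^(4*tri k - 4*(M:ℤ)*(k:ℤ)) * ζ^(3*(k:ℤ) - (k:ℤ)^2 - 4*(k:ℤ)*(m:ℤ)) = x^(tri k) := by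
      rw [← zpow_add₀ hζ0, hx2]
      apply zpow_modeq ζ hζ0 n hζn _ _ (-(2*(k:ℤ)))
      have h2t := two_tri k
      linear_combination h2t + (-2*(k:ℤ)) * hMmZ
    rw [hprod1 k, hQ, hP, pt]
    linear_combination ((-1: AdjoinRoot (cyclotomic n ℚ))^k * Ppoc x M k * Qpoc x M k
      * Wone * ζ^((E:ℤ))) * hC
  have hEVAL : aeval ζ NA = aeval ζ NB := by
    rw [hNA_def, hNB_def, hPd_def]
    simp only [map_sum, map_mul, map_prod, map_sub, map_one, map_pow, aeval_X, aeval_C]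
    have hsub : range (M+1) ⊆ range (n-m+1) := Finset.range_subset_range.mpr (by omega)
    have hvan : ∀ k ∈ range (n-m+1), k ∉ range (M+1) →
        (∏ j ∈ range k, ((1: AdjoinRoot (cyclotomic n ℚ)) - ζ^(4*m-2) * (ζ^4)^j))
          * (∏ j ∈ Ico k (n-m), (1 - ζ^2 * (ζ^2)^j))
          * ζ^(((E:ℤ) + (3*(k:ℤ) - (k:ℤ)^2 - 4*(k:ℤ)*(m:ℤ))).toNat) = 0 := by
      intro k hk1 hk2
      have hMk : M ∈ range k := by
        rw [Finset.mem_range] at hk2 ⊢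
        omega
      apply mul_eq_zero_of_left
      apply mul_eq_zero_of_left
      apply Finset.prod_eq_zero hMk
      have hone : ζ^(4*m-2) * (ζ^4)^M = 1 := by
        rw [← pow_mul, ← pow_add, show 4*m-2+4*M = n*2 by omega, pow_mul, hζn, one_pow]
      rw [hone, sub_self]
    rw [← Finset.sum_subset hsub hvan]
    have hcong : ∀ k ∈ range (M+1),
        (∏ j ∈ range k, ((1: AdjoinRoot (cyclotomic n ℚ)) - ζ^(4*m-2) * (ζ^4)^j))
          * (∏ j ∈ Ico k (n-m), (1 - ζ^2 * (ζ^2)^j))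
          * ζ^(((E:ℤ) + (3*(k:ℤ) - (k:ℤ)^2 - 4*(k:ℤ)*(m:ℤ))).toNat)
        = (ζ^((E:ℤ)) * Wone) * ((-1)^k * x^(tri k) * pt x M k) := by
      intro k hk
      exact hterm k (by rw [Finset.mem_range] at hk; omega)
    rw [Finset.sum_congr rfl hcong, ← Finset.mul_sum]
    have hg : (∑ k ∈ range (M+1), ((-1: AdjoinRoot (cyclotomic n ℚ))^k * x^(tri k) * pt x M k))
        = (-1)^M * x^((M:ℤ)^2) * xpoc x M := (gS_sS_closed x hx0 M).1
    rw [hg]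
    -- now the right-hand side
    have hRHS : (algebraMap ℚ (AdjoinRoot (cyclotomic n ℚ))) (-1:ℚ)
        = (-1: AdjoinRoot (cyclotomic n ℚ)) := by
      rw [map_neg, map_one]
    have hPdK : (∏ j ∈ range (n-m), ((1: AdjoinRoot (cyclotomic n ℚ)) - ζ^2*(ζ^2)^j))
        = xpoc x M * Wone := by
      rw [Finset.prod_congr rfl (fun j _ => hfact2 j), Finset.range_eq_Ico,
        ← Finset.prod_Ico_consecutive _ (Nat.zero_le M) hMnm, hWdef]
      congr 1
      rw [xpoc, Finset.range_eq_Ico]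
    have hPB : ζ^(((E:ℤ) + (-(((n : ℤ) ^ 2 - 1) / 2) + 2 * (m : ℤ) ^ 2 - 2 * (m : ℤ))).toNat)
        = ζ^((E:ℤ)) * x^((M:ℤ)^2) := by
      rw [← zpow_natCast ζ, Int.toNat_of_nonneg hEfB, zpow_add₀ hζ0]
      congr 1
      rw [hfB_eq, hx2]
      apply zpow_modeq ζ hζ0 n hζn _ _ (-(2*(M:ℤ)))
      ring
    have hsign : ((-1: AdjoinRoot (cyclotomic n ℚ))^((n-1)/2+m-1)) = (-1)^M :=
      neg_one_pow_eq_of_even_add (Nat.even_iff.mpr (by omega))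
    rw [hRHS, hPdK, hPB, hsign]
    ring
  -- conclusion
  have hdvd : cyclotomic n ℚ ∣ (NA - NB) := by
    have h0 : AdjoinRoot.mk (cyclotomic n ℚ) (NA - NB) = 0 := by
      rw [map_sub, ← AdjoinRoot.aeval_eq, ← AdjoinRoot.aeval_eq, ← hζdef, sub_eq_zero]
      exact hEVAL
    exact AdjoinRoot.mk_eq_zero.mp h0
  obtain ⟨u, hu⟩ := hdvd
  refine ⟨u, D, hD_not, ?_⟩
  rw [sub_mul, hA_eq, hB_eq, ← map_sub, hu, pow_one]
end

section
/- For every positive odd integer n, (q^{2d+1};q^2)_n / (q;q)_{n-1} ≡ 1 - q^n (mod Phi_n(q)^2) for every integer d with -(n-1)/2 < d < (n-1)/2. -/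
open Finset Polynomial

theorem lemma_congruence (n : ℕ) (hn : Odd n) (hn0 : 0 < n) (d : ℤ)
    (hd1 : -(((n : ℤ) - 1) / 2) < d) (hd2 : d < ((n : ℤ) - 1) / 2) :
    CongrModCyclo n 2
      (qPoch (q ^ (2 * d + 1)) (q ^ 2) n / qPoch q q (n - 1))
      (1 - q ^ n) := by
  classical
  obtain ⟨m, hm⟩ := hn
  have hmd : ((n : ℤ) - 1) / 2 = m := by omega
  rw [hmd] at hd1 hd2
  have hm1 : 1 ≤ m := by omega
  have hn3 : 3 ≤ n := by omega
  have hq0 : q ≠ 0 := RatFunc.X_ne_zero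
  set φ := algebraMap (Polynomial ℚ) (RatFunc ℚ) with hφ
  have hqX : φ (X : Polynomial ℚ) = q := by
    show _ = RatFunc.X; exact RatFunc.algebraMap_X
  set e : ℕ → ℤ := fun j => 2*d+1+2*(j:ℤ) with he
  set j0 : ℕ := ((m:ℤ) - d).toNat with hj0def
  have hj0z : (j0:ℤ) = (m:ℤ) - d := Int.toNat_of_nonneg (by omega)
  have hj0mem : j0 ∈ Finset.range n := by rw [Finset.mem_range]; omega
  have hej0 : e j0 = n := by show 2*d+1+2*(j0:ℤ) = n; rw [hj0z]; omega
  have hnz : (n:ℤ) ≠ 0 := by omega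
  set σ : ℕ → ℕ := fun j => ((e j) % n).toNat with hσ
  have hσlt : ∀ j, σ j < n := by
    intro j
    have h1 : 0 ≤ (e j) % n := Int.emod_nonneg _ hnz
    have h2 : (e j) % n < n := Int.emod_lt_of_pos _ (by omega)
    show ((e j) % n).toNat < n
    omega
  have hcop : IsCoprime (n:ℤ) 2 := by
    rw [Int.isCoprime_iff_gcd_eq_one]
    have hc2 : Nat.Coprime 2 n := (Nat.prime_two.coprime_iff_not_dvd).2 (by omega)
    simpa [Int.gcd] using hc2.symm
  have hinj : ∀ i ∈ Finset.range n, ∀ j ∈ Finset.range n, σ i = σ j → i = j := by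
    intro i hi j hj hij
    rw [Finset.mem_range] at hi hj
    have n1 : 0 ≤ e i % n := Int.emod_nonneg _ hnz
    have n2 : 0 ≤ e j % n := Int.emod_nonneg _ hnz
    have h1 : e i % n = e j % n := by
      have : ((e i) % n).toNat = ((e j) % n).toNat := hij
      omega
    have h2 : (n:ℤ) ∣ e j - e i := Int.ModEq.dvd h1
    have h3 : (n:ℤ) ∣ 2 * ((j:ℤ) - i) := by
      have : e j - e i = 2 * ((j:ℤ) - i) := by show (2*d+1+2*(j:ℤ)) - (2*d+1+2*(i:ℤ)) = _; ring
      rwa [this] at h2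
    have h4 : (n:ℤ) ∣ ((j:ℤ) - i) := hcop.dvd_of_dvd_mul_left h3
    rcases lt_trichotomy i j with h|h|h
    · have := Int.le_of_dvd (by omega) h4; omega
    · exact h
    · have := Int.le_of_dvd (by omega) (dvd_neg.2 h4); omega
  have hσj0 : σ j0 = 0 := by
    show ((e j0) % n).toNat = 0
    rw [hej0, Int.emod_self]
    rfl
  -- primitive root
  have hnne : n ≠ 0 := by omega
  set ζ : ℂ := Complex.exp (2 * Real.pi * Complex.I / n) with hζdef
  have hζ : IsPrimitiveRoot ζ n := Complex.isPrimitiveRoot_exp n hnne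
  have hζn : ζ ^ n = 1 := hζ.pow_eq_one
  have hζ0 : ζ ≠ 0 := hζ.ne_zero hnne
  have hmin : Polynomial.cyclotomic n ℚ = minpoly ℚ ζ :=
    Polynomial.cyclotomic_eq_minpoly_rat hζ hn0
  have hzpow : ∀ j : ℕ, (ζ : ℂ) ^ (e j) = ζ ^ (σ j) := by
    intro j
    have hnn : 0 ≤ e j % n := Int.emod_nonneg _ hnz
    have key : e j = (n:ℤ) * (e j / n) + (e j % n) := (Int.mul_ediv_add_emod _ _).symm
    calc ζ ^ (e j) = ζ ^ ((n:ℤ) * (e j / n) + (e j % n)) := by rw [← key]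
      _ = (ζ ^ ((n:ℤ)))^(e j / n) * ζ ^ (e j % n) := by rw [zpow_add₀ hζ0, zpow_mul]
      _ = ζ ^ (e j % n) := by
          rw [zpow_natCast, hζn, one_zpow, one_mul]
      _ = ζ ^ (σ j) := by
          rw [show (e j % n) = ((σ j :ℕ):ℤ) from (Int.toNat_of_nonneg hnn).symm, zpow_natCast]
  -- image of σ
  have himage : Finset.image σ ((Finset.range n).erase j0) = (Finset.range n).erase 0 := by
    apply Finset.eq_of_subset_of_card_le
    · intro k hk
      obtain ⟨j, hj, rfl⟩ := Finset.mem_image.1 hk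
      obtain ⟨hjne, hjr⟩ := Finset.mem_erase.1 hj
      refine Finset.mem_erase.2 ⟨?_, Finset.mem_range.2 (hσlt j)⟩
      intro h0
      exact hjne (hinj j hjr j0 hj0mem (by rw [h0, hσj0]))
    · have hcard1 : (Finset.image σ ((Finset.range n).erase j0)).card
          = ((Finset.range n).erase j0).card := by
        apply Finset.card_image_of_injOn
        intro x hx y hy hxy
        exact hinj x (Finset.mem_of_mem_erase hx) y (Finset.mem_of_mem_erase hy) hxy
      rw [hcard1, Finset.card_erase_of_mem hj0mem,
        Finset.card_erase_of_mem (Finset.mem_range.2 (by omega)), Finset.card_range]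
  have herase : (Finset.range n).erase 0 = Finset.image (· + 1) (Finset.range (n-1)) := by
    ext k
    simp only [Finset.mem_erase, Finset.mem_range, Finset.mem_image]
    constructor
    · rintro ⟨h1, h2⟩; exact ⟨k - 1, by omega, by omega⟩
    · rintro ⟨a, ha, rfl⟩; omega
  have hprodζ : ∏ j ∈ (Finset.range n).erase j0, (1 - ζ ^ (e j))
      = ∏ j ∈ Finset.range (n-1), (1 - ζ ^ (j+1)) := by
    calc ∏ j ∈ (Finset.range n).erase j0, (1 - ζ^(e j))
        = ∏ j ∈ (Finset.range n).erase j0, (1 - ζ^(σ j)) :=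
          Finset.prod_congr rfl (fun j _ => by rw [hzpow])
      _ = ∏ k ∈ Finset.image σ ((Finset.range n).erase j0), (1 - ζ^k) := by
          rw [Finset.prod_image (fun x hx y hy hxy =>
            hinj x (Finset.mem_of_mem_erase hx) y (Finset.mem_of_mem_erase hy) hxy)]
      _ = ∏ k ∈ (Finset.range n).erase 0, (1 - ζ^k) := by rw [himage]
      _ = ∏ j ∈ Finset.range (n-1), (1 - ζ^(j+1)) := by
          rw [herase, Finset.prod_image (fun x _ y _ h => by omega)]
  -- polynomials
  have henn : ∀ j : ℕ, 0 ≤ (n:ℤ) + e j := by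
    intro j
    show 0 ≤ (n:ℤ) + (2*d+1+2*(j:ℤ))
    omega
  set M : ℕ := n * (n - 1) with hM
  set F : Polynomial ℚ := ∏ j ∈ (Finset.range n).erase j0,
      ((X:Polynomial ℚ)^n - X^(((n:ℤ) + e j).toNat)) with hF
  set G : Polynomial ℚ := ∏ j ∈ Finset.range (n-1),
      ((X:Polynomial ℚ)^n - X^(n+j+1)) with hG
  set Dp : Polynomial ℚ := ∏ j ∈ Finset.range (n-1), (1 - (X:Polynomial ℚ)^(j+1)) with hDp
  -- aeval computations
  have haevalF : aeval ζ F = ∏ j ∈ (Finset.range n).erase j0, (1 - ζ ^ (e j)) := by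
    rw [hF, map_prod]
    apply Finset.prod_congr rfl
    intro j _
    rw [map_sub, map_pow, map_pow, aeval_X]
    have h1 : (ζ:ℂ) ^ (((n:ℤ) + e j).toNat) = ζ ^ ((n:ℤ) + e j) := by
      rw [← zpow_natCast ζ (((n:ℤ) + e j).toNat), Int.toNat_of_nonneg (henn j)]
    rw [h1, zpow_add₀ hζ0, zpow_natCast, hζn, one_mul]
  have haevalG : aeval ζ G = ∏ j ∈ Finset.range (n-1), (1 - ζ ^ (j+1)) := by
    rw [hG, map_prod]
    apply Finset.prod_congr rfl
    intro j _
    rw [map_sub, map_pow, map_pow, aeval_X, hζn]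
    rw [show n + j + 1 = n + (j+1) by ring, pow_add, hζn, one_mul]
  have hFG : Polynomial.cyclotomic n ℚ ∣ F - G := by
    rw [hmin]
    apply minpoly.dvd
    rw [map_sub, haevalF, haevalG, hprodζ, sub_self]
  obtain ⟨h, hh⟩ := hFG
  obtain ⟨c, hc⟩ := Polynomial.cyclotomic.dvd_X_pow_sub_one n ℚ
  have h1X : (1 : Polynomial ℚ) - X^n = Polynomial.cyclotomic n ℚ * (-c) := by
    rw [mul_neg, ← hc]; ring
  -- RatFunc conversions
  have hDq : qPoch q q (n-1) = φ Dp := by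
    rw [qPoch, hDp, map_prod]
    apply Finset.prod_congr rfl
    intro j _
    rw [map_sub, map_one, map_pow, hqX, pow_succ]
    ring
  set P : RatFunc ℚ := ∏ j ∈ (Finset.range n).erase j0, (1 - q^(e j)) with hP
  have hNum : qPoch (q^(2*d+1)) (q^2) n = (1 - q^n) * P := by
    rw [qPoch]
    have hfac : ∀ j ∈ Finset.range n, (1 - q^(2*d+1) * (q^2)^j) = 1 - q^(e j) := by
      intro j _
      have hexp : (2*d+1) + ((2*j :ℕ):ℤ) = e j := by
        show _ = 2*d+1+2*(j:ℤ); omega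
      rw [← pow_mul, ← zpow_natCast q (2*j), ← zpow_add₀ hq0, hexp]
    rw [Finset.prod_congr rfl hfac, ← Finset.mul_prod_erase _ _ hj0mem, hej0, zpow_natCast]
  have hcarde : ((Finset.range n).erase j0).card = n - 1 := by
    rw [Finset.card_erase_of_mem hj0mem, Finset.card_range]
  have hGq : φ G = q^M * φ Dp := by
    rw [hG, hDp, map_prod, map_prod, hM, pow_mul,
      show ((q:RatFunc ℚ)^n)^(n-1) = ∏ _x ∈ Finset.range (n-1), q^n by
        rw [Finset.prod_const, Finset.card_range],
      ← Finset.prod_mul_distrib]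
    apply Finset.prod_congr rfl
    intro j _
    rw [map_sub, map_pow, map_pow, hqX, map_sub, map_one, map_pow, hqX,
      show n + j + 1 = n + (j+1) by ring, pow_add]
    ring
  have hFq : φ F = q^M * P := by
    rw [hF, hP, map_prod, hM, pow_mul,
      show ((q:RatFunc ℚ)^n)^(n-1) = ∏ _x ∈ (Finset.range n).erase j0, q^n by
        rw [Finset.prod_const, hcarde],
      ← Finset.prod_mul_distrib]
    apply Finset.prod_congr rfl
    intro j _
    rw [map_sub, map_pow, map_pow, hqX]
    have h1 : (q:RatFunc ℚ) ^ (((n:ℤ) + e j).toNat) = q ^ ((n:ℤ) + e j) := by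
      rw [← zpow_natCast q (((n:ℤ) + e j).toNat), Int.toNat_of_nonneg (henn j)]
    rw [h1, zpow_add₀ hq0, zpow_natCast]
    ring
  have hv : ¬ (Polynomial.cyclotomic n ℚ ∣ (X:Polynomial ℚ)^M * Dp) := by
    intro hdvd
    obtain ⟨w, hw⟩ := hdvd
    have h0 : aeval ζ ((X:Polynomial ℚ)^M * Dp) = 0 := by
      rw [hw, map_mul, hmin, minpoly.aeval, zero_mul]
    have h1 : aeval ζ ((X:Polynomial ℚ)^M * Dp) = ζ^M * ∏ j ∈ Finset.range (n-1), (1 - ζ^(j+1)) := by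
      rw [map_mul, map_pow, aeval_X, hDp, map_prod]
      congr 1
      apply Finset.prod_congr rfl
      intro j _
      rw [map_sub, map_one, map_pow, aeval_X]
    rw [h1] at h0
    rcases mul_eq_zero.1 h0 with h2 | h2
    · exact pow_ne_zero M hζ0 h2
    · rw [Finset.prod_eq_zero_iff] at h2
      obtain ⟨j, hj, hj2⟩ := h2
      rw [Finset.mem_range] at hj
      have : ζ^(j+1) = 1 := by linear_combination -hj2
      have := (hζ.pow_eq_one_iff_dvd (j+1)).1 this
      have := Nat.le_of_dvd (by omega) this
      omega
  have hDpne : Dp ≠ 0 := by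
    intro h0
    have : Polynomial.eval 0 Dp = 1 := by
      rw [hDp, Polynomial.eval_prod]
      apply Finset.prod_eq_one
      intro j _
      simp
    rw [h0] at this
    simp at this
  have hDq0 : φ Dp ≠ 0 := (map_ne_zero_iff φ (RatFunc.algebraMap_injective ℚ)).2 hDpne
  -- assembly
  refine ⟨(-c) * h, (X:Polynomial ℚ)^M * Dp, hv, ?_⟩
  rw [hNum, hDq, map_mul, map_pow, hqX]
  have key : ((1 - q^n) * P / φ Dp - (1 - q^n)) * (q^M * φ Dp)
      = (1 - q^n) * (q^M * P) - (1 - q^n) * (q^M * φ Dp) := by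
    field_simp
  rw [key, ← hFq, ← hGq]
  have hq_n : (1:RatFunc ℚ) - q^n = φ (1 - X^n) := by
    rw [map_sub, map_one, map_pow, hqX]
  rw [hq_n, ← map_mul, ← map_mul, ← map_sub, ← hφ]
  congr 1
  rw [← mul_sub, hh, h1X]
  ring
end
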